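/- Let {S_i}_{i∈I} be a collection of subsets of a set X such that each S_i partitions X \ S_i into two pieces A_i^0 and A_i^1. Define vertices of a graph as functions V assigning to each i one of A_i^0, A_i^1, subject to the consistency condition that if the chosen set at i is contained in some A_j^ε then the choice at j is A_j^ε; edges join vertices differing in exactly one coordinate. Then for a vertex V with A_i^ε ∈ V, the set W = (V \ {A_i^ε}) ∪ {A_i^{1+ε}} is a vertex if and only if A_i^ε is minimal in V, i.e., A_i^ε contains no other element of V. -/
import Mathlib


/-- Sageev's adjacency lemma for the cube complex dual to a collection of
two-sided cut sets `{S i}` with halfspaces `A i ε` (superscripts mod 2,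
modelled on `Bool`). A choice function `V` is a vertex if it is consistent:
whenever the chosen halfspace at `i` is contained in some halfspace of `j`,
the choice at `j` is that halfspace. Flipping the coordinate `i` of a vertex
`V` yields a vertex if and only if the chosen halfspace `A i (V i)` is minimal
in `V`, i.e. contains no other chosen halfspace. -/
theorem stmt_11 {X I : Type*} [DecidableEq I] (A : I → Bool → Set X)
    (hdisj : ∀ i, Disjoint (A i false) (A i true))
    (hne : ∀ i ε, (A i ε).Nonempty)
    (hopp : ∀ i j ε δ, i ≠ j → A i ε ⊆ A j δ → A j (!δ) ⊆ A i (!ε))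
    (V : I → Bool)
    (hV : ∀ i j ε, A i (V i) ⊆ A j ε → V j = ε) (i : I) :
    (∀ j k ε, A j (Function.update V i (!(V i)) j) ⊆ A k ε →
        Function.update V i (!(V i)) k = ε) ↔
      ∀ j, j ≠ i → ¬ A j (V j) ⊆ A i (V i) := by
  constructor
  · intro hW j hj hsub
    have h1 : Function.update V i (!(V i)) j = V j := Function.update_of_ne hj _ _
    have := hW j i (V i) (by rw [h1]; exact hsub)
    rw [Function.update_self] at this
    exact (Bool.not_ne_self (V i)) this
  · intro hmin j k ε hsub
    by_cases hji : j = i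
    · subst hji
      rw [Function.update_self] at hsub
      by_cases hki : k = j
      · subst hki
        rw [Function.update_self]
        by_contra hε
        have hε' : ε = V k := by
          cases ε <;> cases h : V k <;> simp_all
        subst hε'
        obtain ⟨x, hx⟩ := hne k (!(V k))
        have hx2 := hsub hx
        have := hdisj k
        rw [Set.disjoint_left] at this
        cases h : V k <;> rw [h] at hx hx2 <;> [exact this hx2 hx; exact this hx hx2]
      · rw [Function.update_of_ne hki]
        have h2 := hopp j k (!(V j)) ε (Ne.symm hki) hsub
        rw [Bool.not_not] at h2
        by_contra hne'
        have : V k = !ε := by cases ε <;> cases h : V k <;> simp_all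
        exact hmin k hki (this ▸ h2)
    · rw [Function.update_of_ne hji] at hsub
      by_cases hki : k = i
      · subst hki
        exact absurd ((hV j k ε hsub) ▸ hsub) (hmin j hji)
      · rw [Function.update_of_ne hki]
        exact hV j k ε hsub
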